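/- If two spike trains s and s* with entries in θℤ both lie in the open Alexiewicz ball of radius θ around the same f, then their unweighted Alexiewicz distance satisfies ‖s - s*‖_A ∈ {0, θ}, where ‖g‖_A = max_n |∑_{k=0}^n g_k|. -/

import Mathlib

/-- Discrete weighted Alexiewicz norm on `ℝ^{N+1}`. -/
noncomputable def anorm (β : ℝ) (N : ℕ) (f : ℕ → ℝ) : ℝ :=
  Finset.sup' (Finset.range (N + 1)) (by simp)
    (fun n => |∑ k ∈ Finset.range (n + 1), β ^ (n - k) * f k|)

theorem spike_train_distance_dichotomy (θ : ℝ) (hθ : 0 < θ) (N : ℕ)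
    (f s s' : ℕ → ℝ)
    (hs : ∀ k ≤ N, ∃ m : ℤ, s k = θ * m) (hs' : ∀ k ≤ N, ∃ m : ℤ, s' k = θ * m)
    (h1 : anorm 1 N (fun k => f k - s k) < θ)
    (h2 : anorm 1 N (fun k => f k - s' k) < θ) :
    anorm 1 N (fun k => s k - s' k) = 0 ∨ anorm 1 N (fun k => s k - s' k) = θ := by
  have hne : (Finset.range (N + 1)).Nonempty := by simp
  -- partial sums of s - s' are θ times an integer
  have hint : ∀ n ≤ N, ∃ M : ℤ, ∑ k ∈ Finset.range (n + 1), (s k - s' k) = θ * M := by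
    intro n hn
    induction n with
    | zero =>
        obtain ⟨m, hm⟩ := hs 0 (Nat.zero_le _)
        obtain ⟨m', hm'⟩ := hs' 0 (Nat.zero_le _)
        exact ⟨m - m', by simp [hm, hm']; push_cast; ring⟩
    | succ n ih =>
        obtain ⟨M, hM⟩ := ih (Nat.le_of_succ_le hn)
        obtain ⟨m, hm⟩ := hs (n + 1) hn
        obtain ⟨m', hm'⟩ := hs' (n + 1) hn
        refine ⟨M + (m - m'), ?_⟩
        rw [Finset.sum_range_succ, hM, hm, hm']
        push_cast; ring
    -- dichotomy for each partial sum
  have key : ∀ n ∈ Finset.range (N + 1),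
      |∑ k ∈ Finset.range (n + 1), (1:ℝ) ^ (n - k) * (s k - s' k)| = 0 ∨
      |∑ k ∈ Finset.range (n + 1), (1:ℝ) ^ (n - k) * (s k - s' k)| = θ := by
    intro n hn
    rw [Finset.mem_range, Nat.lt_succ_iff] at hn
    obtain ⟨M, hM⟩ := hint n hn
    have hb1 : |∑ k ∈ Finset.range (n + 1), (1:ℝ) ^ (n - k) * (f k - s k)| < θ :=
      lt_of_le_of_lt
        (Finset.le_sup' (fun n => |∑ k ∈ Finset.range (n + 1), (1:ℝ) ^ (n - k) * (f k - s k)|)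
          (Finset.mem_range.mpr (Nat.lt_succ_of_le hn))) h1
    have hb2 : |∑ k ∈ Finset.range (n + 1), (1:ℝ) ^ (n - k) * (f k - s' k)| < θ :=
      lt_of_le_of_lt
        (Finset.le_sup' (fun n => |∑ k ∈ Finset.range (n + 1), (1:ℝ) ^ (n - k) * (f k - s' k)|)
          (Finset.mem_range.mpr (Nat.lt_succ_of_le hn))) h2
    simp only [one_pow, one_mul] at hb1 hb2 ⊢
    have hdecomp : ∑ k ∈ Finset.range (n + 1), (s k - s' k)
        = (∑ k ∈ Finset.range (n + 1), (f k - s' k))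
          - (∑ k ∈ Finset.range (n + 1), (f k - s k)) := by
      rw [← Finset.sum_sub_distrib]; apply Finset.sum_congr rfl; intros; ring
    have hlt : |∑ k ∈ Finset.range (n + 1), (s k - s' k)| < 2 * θ := by
      rw [hdecomp]
      calc _ ≤ _ := abs_sub _ _
        _ < θ + θ := add_lt_add hb2 hb1
        _ = 2 * θ := by ring
    rw [hM] at hlt ⊢
    rw [abs_mul, abs_of_pos hθ] at hlt ⊢
    have hMlt : |(M : ℝ)| < 2 := by nlinarith
    have hM2 : |M| < 2 := by exact_mod_cast hMlt
    rw [abs_lt] at hM2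
    obtain ⟨hl, hr⟩ := hM2
    interval_cases M <;> simp [hθ.le]
  obtain ⟨n, hn, hEq⟩ := Finset.exists_mem_eq_sup' hne
    (fun n => |∑ k ∈ Finset.range (n + 1), (1:ℝ) ^ (n - k) * (s k - s' k)|)
  rcases key n hn with h | h
  · left; rw [anorm, hEq, h]
  · right; rw [anorm, hEq, h]
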